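/- arXiv:0805.0380 — 2 statements merged into one kernel-verified Lean document; each statement's English description precedes it below -/
import Mathlib

section
/- There exists a universal constant c > 0 such that for every function u : V* → ℝ with u(a₀) = 0 and E(u,u) := sup_n E_n(u,u) < +∞, one has sup_{x∈V*} |u(x)| ≤ c · E(u,u)^{1/2}. -/
open scoped Classical
open Real Set

noncomputable section

abbrev Pt : Type := ℝ × ℝ

/-- The three corners of the unit triangle. -/
def sierA : Fin 3 → Pt
  | 0 => (0, 0)
  | 1 => (1 / 2, Real.sqrt 3 / 2)
  | 2 => (1, 0)

/-- The three contractions `φᵢ(x) = (x + aᵢ)/2`. -/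
def ctr (i : Fin 3) (x : Pt) : Pt :=
  ((x.1 + (sierA i).1) / 2, (x.2 + (sierA i).2) / 2)

/-- The vertex sets `V n`. -/
def V : ℕ → Finset Pt
  | 0 => {sierA 0, sierA 1, sierA 2}
  | n + 1 => (V n).image (ctr 0) ∪ (V n).image (ctr 1) ∪ (V n).image (ctr 2)

/-- The (ordered) edge sets: `(x, y) ∈ Ed n` iff `{x,y} ∈ E_n`; each undirected
edge appears with both orientations. -/
def Ed : ℕ → Finset (Pt × Pt)
  | 0 => (V 0 ×ˢ V 0).filter fun p => p.1 ≠ p.2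
  | n + 1 => Finset.univ.biUnion fun i : Fin 3 => (Ed n).image fun p => (ctr i p.1, ctr i p.2)

/-- `V* = ⋃ n, V n`. -/
def Vstar : Set Pt := ⋃ n, (V n : Set Pt)

/-- The level-`n` energy `E_n(u,u) = (5/3)^n Σ_{{x,y} ∈ E_n} (u y - u x)²`
(each undirected edge counted once, whence the division by 2). -/
def En (n : ℕ) (u : Pt → ℝ) : ℝ :=
  (5 / 3 : ℝ) ^ n * (∑ p ∈ Ed n, (u p.2 - u p.1) ^ 2) / 2

/-- The discrete Laplacian `Δ_n u (x) = 5^n Σ_{y ∼ₙ x} (u y - u x)`. -/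
def lap (n : ℕ) (u : Pt → ℝ) (x : Pt) : ℝ :=
  (5 : ℝ) ^ n * ∑ p ∈ (Ed n).filter (fun p => p.1 = x), (u p.2 - u p.1)

lemma sierA_mem_V0 (i : Fin 3) : sierA i ∈ V 0 := by
  fin_cases i <;> simp [V]

lemma ctr_mem_V {n : ℕ} (i : Fin 3) {z : Pt} (hz : z ∈ V n) : ctr i z ∈ V (n + 1) := by
  show ctr i z ∈ (V n).image (ctr 0) ∪ (V n).image (ctr 1) ∪ (V n).image (ctr 2)
  fin_cases i
  · exact Finset.mem_union_left _ (Finset.mem_union_left _ (Finset.mem_image_of_mem _ hz))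
  · exact Finset.mem_union_left _ (Finset.mem_union_right _ (Finset.mem_image_of_mem _ hz))
  · exact Finset.mem_union_right _ (Finset.mem_image_of_mem _ hz)

lemma ctr_sierA (i : Fin 3) : ctr i (sierA i) = sierA i := by
  unfold ctr; exact Prod.ext (by ring) (by ring)

lemma sierA_injective : Function.Injective sierA := by
  have h3 : Real.sqrt 3 ≠ 0 := by positivity
  intro i j h
  fin_cases i <;> fin_cases j <;> simp_all [sierA, Prod.ext_iff]

lemma edge0 {i j : Fin 3} (h : i ≠ j) : (sierA i, sierA j) ∈ Ed 0 := by
  simp only [Ed, Finset.mem_filter, Finset.mem_product]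
  exact ⟨⟨sierA_mem_V0 i, sierA_mem_V0 j⟩, fun hc => h (sierA_injective hc)⟩

lemma ctr_edge {n : ℕ} (i : Fin 3) {p : Pt × Pt} (hp : p ∈ Ed n) :
    (ctr i p.1, ctr i p.2) ∈ Ed (n + 1) := by
  simp only [Ed, Finset.mem_biUnion, Finset.mem_univ, Finset.mem_image, true_and]
  exact ⟨i, p, hp, rfl⟩

lemma mem_V_succ {n : ℕ} {x : Pt} (hx : x ∈ V (n + 1)) : ∃ i z, z ∈ V n ∧ x = ctr i z := by
  simp only [V, Finset.mem_union, Finset.mem_image] at hx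
  rcases hx with (⟨z, hz, rfl⟩ | ⟨z, hz, rfl⟩) | ⟨z, hz, rfl⟩
  exacts [⟨0, z, hz, rfl⟩, ⟨1, z, hz, rfl⟩, ⟨2, z, hz, rfl⟩]

lemma V_succ_cases : ∀ n : ℕ, ∀ x ∈ V (n + 1), x ∈ V n ∨ ∃ y ∈ V n, (y, x) ∈ Ed (n + 1) := by
  intro n
  induction n with
  | zero =>
    intro x hx
    obtain ⟨i, z, hz, rfl⟩ := mem_V_succ hx
    have : ∃ j, z = sierA j := by
      simp only [V, Finset.mem_insert, Finset.mem_singleton] at hz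
      rcases hz with h | h | h
      exacts [⟨0, h⟩, ⟨1, h⟩, ⟨2, h⟩]
    obtain ⟨j, rfl⟩ := this
    by_cases hij : i = j
    · subst hij; left; rw [ctr_sierA]; exact sierA_mem_V0 i
    · right
      exact ⟨sierA i, sierA_mem_V0 i, by
        have := ctr_edge i (edge0 hij)
        rwa [ctr_sierA] at this⟩
  | succ n ih =>
    intro x hx
    obtain ⟨i, z, hz, rfl⟩ := mem_V_succ hx
    rcases ih z hz with h | ⟨y, hy, he⟩
    · left; exact ctr_mem_V i h
    · right
      exact ⟨ctr i y, ctr_mem_V i hy, ctr_edge i he⟩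

lemma sqrt_pow' (x : ℝ) (hx : 0 ≤ x) : ∀ n : ℕ, Real.sqrt (x ^ n) = (Real.sqrt x) ^ n := by
  intro n
  induction n with
  | zero => simp
  | succ n ih => rw [pow_succ, pow_succ, Real.sqrt_mul (pow_nonneg hx n), ih]

lemma geom_bound : ∀ m : ℕ, ∑ k ∈ Finset.range m, (Real.sqrt (3 / 5)) ^ k ≤ 5 - 5 * (Real.sqrt (3 / 5)) ^ m := by
  have hr0 : (0 : ℝ) ≤ Real.sqrt (3 / 5) := Real.sqrt_nonneg _
  have hsq : (Real.sqrt (3 / 5)) ^ 2 = 3 / 5 := Real.sq_sqrt (by norm_num)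
  have hr : Real.sqrt (3 / 5) ≤ 4 / 5 := by nlinarith
  intro m
  induction m with
  | zero => simp
  | succ m ih =>
    rw [Finset.sum_range_succ, pow_succ]
    have hpn : (0 : ℝ) ≤ (Real.sqrt (3 / 5)) ^ m := pow_nonneg hr0 m
    nlinarith

/-- Uniform bound: there is a universal constant `c > 0` such that every
`u : V* → ℝ` with `u(a₀) = 0` and `E(u,u) = sup_n E_n(u,u) < ∞` satisfies
`sup_{x ∈ V*} |u x| ≤ c E(u,u)^{1/2}`. -/
theorem sup_bound_of_energy :
    ∃ c : ℝ, 0 < c ∧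
      ∀ u : Pt → ℝ, u (sierA 0) = 0 → BddAbove (Set.range fun n => En n u) →
        ∀ x ∈ Vstar, |u x| ≤ c * Real.sqrt (sSup (Set.range fun n => En n u)) := by
  refine ⟨8, by norm_num, ?_⟩
  intro u hu0 hbdd x hx
  set S : ℝ := sSup (Set.range fun n => En n u) with hS
  have hEnS : ∀ n, En n u ≤ S := fun n => le_csSup hbdd ⟨n, rfl⟩
  have hEn0 : ∀ n, 0 ≤ En n u := by
    intro n
    have : (0:ℝ) ≤ ∑ p ∈ Ed n, (u p.2 - u p.1) ^ 2 :=
      Finset.sum_nonneg fun p _ => sq_nonneg _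
    unfold En; positivity
  have hS0 : 0 ≤ S := le_trans (hEn0 0) (hEnS 0)
  set r : ℝ := Real.sqrt (3 / 5) with hr
  have hr0 : 0 ≤ r := Real.sqrt_nonneg _
  -- edge estimate
  have edge_est : ∀ n : ℕ, ∀ p ∈ Ed n, |u p.2 - u p.1| ≤ Real.sqrt (2 * S) * r ^ n := by
    intro n p hp
    have hsum : (u p.2 - u p.1) ^ 2 ≤ ∑ q ∈ Ed n, (u q.2 - u q.1) ^ 2 :=
      Finset.single_le_sum (f := fun q : Pt × Pt => (u q.2 - u q.1) ^ 2) (fun q _ => sq_nonneg _) hp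
    have hkey : (3 / 5 : ℝ) ^ n * (5 / 3 : ℝ) ^ n = 1 := by
      rw [← mul_pow]; norm_num
    have h1 : (5 / 3 : ℝ) ^ n * (∑ q ∈ Ed n, (u q.2 - u q.1) ^ 2) / 2 ≤ S := hEnS n
    have h2 : (3 / 5 : ℝ) ^ n * ((5 / 3 : ℝ) ^ n * (∑ q ∈ Ed n, (u q.2 - u q.1) ^ 2) / 2)
        ≤ (3 / 5 : ℝ) ^ n * S :=
      mul_le_mul_of_nonneg_left h1 (by positivity)
    have h3 : (u p.2 - u p.1) ^ 2 ≤ 2 * S * (3 / 5) ^ n := by nlinarith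
    calc |u p.2 - u p.1| = Real.sqrt ((u p.2 - u p.1) ^ 2) := (Real.sqrt_sq_eq_abs _).symm
      _ ≤ Real.sqrt (2 * S * (3 / 5) ^ n) := Real.sqrt_le_sqrt h3
      _ = Real.sqrt (2 * S) * Real.sqrt ((3 / 5 : ℝ) ^ n) := Real.sqrt_mul (by positivity) _
      _ = Real.sqrt (2 * S) * r ^ n := by rw [sqrt_pow' (3/5) (by norm_num) n]
  -- main induction
  have main : ∀ n : ℕ, ∀ y ∈ V n,
      |u y| ≤ Real.sqrt (2 * S) * ∑ k ∈ Finset.range (n + 1), r ^ k := by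
    intro n
    induction n with
    | zero =>
      intro y hy
      have hy' : y = sierA 0 ∨ y = sierA 1 ∨ y = sierA 2 := by
        simpa [V] using hy
      have hone : (∑ k ∈ Finset.range 1, r ^ k) = 1 := by simp
      rw [hone, mul_one]
      by_cases h0 : y = sierA 0
      · rw [h0, hu0, abs_zero]; exact Real.sqrt_nonneg (2 * S)
      · have hj : ∃ j : Fin 3, y = sierA j ∧ (0 : Fin 3) ≠ j := by
          rcases hy' with h | h | h
          · exact absurd h h0
          · exact ⟨1, h, by decide⟩
          · exact ⟨2, h, by decide⟩
        obtain ⟨j, rfl, hj0⟩ := hj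
        have := edge_est 0 _ (edge0 hj0)
        simp only [pow_zero, mul_one] at this
        calc |u (sierA j)| = |u (sierA j) - u (sierA 0)| := by rw [hu0, sub_zero]
          _ ≤ Real.sqrt (2 * S) := by simpa using this
    | succ n ih =>
      intro y hy
      rcases V_succ_cases n y hy with h | ⟨z, hz, he⟩
      · refine (ih y h).trans ?_
        apply mul_le_mul_of_nonneg_left _ (Real.sqrt_nonneg _)
        apply Finset.sum_le_sum_of_subset_of_nonneg
        · exact Finset.range_subset_range.2 (by omega)
        · intro k _ _; positivity
      · have h1 : |u y| ≤ |u z| + |u y - u z| := by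
          have := abs_add_le (u z) (u y - u z)
          simp at this ⊢
          linarith [this]
        have h2 := edge_est (n + 1) _ he
        simp only at h2
        have h3 := ih z hz
        rw [Finset.sum_range_succ, mul_add]
        calc |u y| ≤ |u z| + |u y - u z| := h1
          _ ≤ Real.sqrt (2 * S) * ∑ k ∈ Finset.range (n + 1), r ^ k
              + Real.sqrt (2 * S) * r ^ (n + 1) := add_le_add h3 h2
  -- conclude
  obtain ⟨n, hn⟩ : ∃ n, x ∈ V n := by
    simpa [Vstar] using hx
  have h1 := main n x hn
  have h2 : (∑ k ∈ Finset.range (n + 1), r ^ k) ≤ 5 := by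
    have := geom_bound (n + 1)
    nlinarith [pow_nonneg hr0 (n + 1)]
  have hsq2 : Real.sqrt (2 * S) = Real.sqrt 2 * Real.sqrt S := Real.sqrt_mul (by norm_num) S
  have hs2 : Real.sqrt 2 ≤ 8 / 5 := by
    nlinarith [Real.sq_sqrt (show (0:ℝ) ≤ 2 by norm_num), Real.sqrt_nonneg 2]
  have hsS : 0 ≤ Real.sqrt S := Real.sqrt_nonneg S
  calc |u x| ≤ Real.sqrt (2 * S) * ∑ k ∈ Finset.range (n + 1), r ^ k := h1
    _ ≤ Real.sqrt (2 * S) * 5 := mul_le_mul_of_nonneg_left h2 (Real.sqrt_nonneg _)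
    _ = 5 * Real.sqrt 2 * Real.sqrt S := by rw [hsq2]; ring
    _ ≤ 8 * Real.sqrt S := by nlinarith [Real.sqrt_nonneg 2]

end
end

section
/- For every function u : V* → ℝ and every n ≥ 0, sup_{x∈V*} |u(x) − ū_n(x)| ≤ 2 · sup{ |u(x) − u(y)| : x, y ∈ V*, |x − y| ≤ 2^{−n} }, where |x − y| is the Euclidean distance in ℝ². -/
open scoped Classical
open Real Set

noncomputable section

/-- Euclidean distance in ℝ². -/
def eucl (x y : Pt) : ℝ := Real.sqrt ((y.1 - x.1) ^ 2 + (y.2 - x.2) ^ 2)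

/-- `ub` is the harmonic extension `ū_n` of `u` from level `n`. -/
def IsHarmonicExtension (n : ℕ) (u ub : Pt → ℝ) : Prop :=
  (∀ x ∈ (V n : Set Pt), ub x = u x) ∧
  ∀ m : ℕ, n < m → ∀ x ∈ (V m : Set Pt), x ∉ (V (m - 1) : Set Pt) → lap m ub x = 0

lemma hs3 : (0:ℝ) < Real.sqrt 3 := Real.sqrt_pos.2 (by norm_num)

lemma hs3sq : Real.sqrt 3 * Real.sqrt 3 = 3 := Real.mul_self_sqrt (by norm_num)

def ctrW : List (Fin 3) → Pt → Pt
  | [], x => x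
  | i :: w, x => ctr i (ctrW w x)

@[simp] lemma ctrW_nil (x : Pt) : ctrW [] x = x := rfl
@[simp] lemma ctrW_cons (i : Fin 3) (w : List (Fin 3)) (x : Pt) :
    ctrW (i :: w) x = ctr i (ctrW w x) := rfl

lemma ctrW_append (w w' : List (Fin 3)) (x : Pt) :
    ctrW (w ++ w') x = ctrW w (ctrW w' x) := by
  induction w with
  | nil => rfl
  | cons i t ih => simp [ih]

lemma ctr_inj {i : Fin 3} {p q : Pt} (h : ctr i p = ctr i q) : p = q := by
  have h1 := congrArg Prod.fst h
  have h2 := congrArg Prod.snd h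
  simp only [ctr] at h1 h2
  exact Prod.ext (by linarith) (by linarith)

lemma ctrW_inj {w : List (Fin 3)} {p q : Pt} (h : ctrW w p = ctrW w q) : p = q := by
  induction w with
  | nil => exact h
  | cons i t ih => exact ih (ctr_inj h)

def inT (p : Pt) : Prop :=
  0 ≤ p.2 ∧ p.2 ≤ Real.sqrt 3 * p.1 ∧ p.2 ≤ Real.sqrt 3 * (1 - p.1)

lemma inT_sierA (i : Fin 3) : inT (sierA i) := by
  have h := hs3
  have h := hs3
  fin_cases i <;> refine ⟨?_, ?_, ?_⟩ <;> simp [sierA] <;> nlinarith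

lemma inT_ctr {p : Pt} (i : Fin 3) (h : inT p) : inT (ctr i p) := by
  obtain ⟨h0, h1, h2⟩ := h
  have h := hs3
  fin_cases i <;>
    refine ⟨by simp [ctr, sierA]; nlinarith, by simp [ctr, sierA]; nlinarith,
      by simp [ctr, sierA]; nlinarith⟩

lemma inT_ctrW {p : Pt} (w : List (Fin 3)) (h : inT p) : inT (ctrW w p) := by
  induction w with
  | nil => exact h
  | cons i t ih => exact inT_ctr i ih

lemma sierA_ne {i j : Fin 3} (h : i ≠ j) : sierA i ≠ sierA j := by
  have h3 := hs3
  fin_cases i <;> fin_cases j <;> simp_all [sierA, Prod.ext_iff] <;> intro hc <;> nlinarith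

lemma mem_V {m : ℕ} {x : Pt} :
    x ∈ V m ↔ ∃ w : List (Fin 3), w.length = m ∧ ∃ j, ctrW w (sierA j) = x := by
  induction m generalizing x with
  | zero =>
    constructor
    · intro hx
      simp [V] at hx
      rcases hx with h | h | h
      exacts [⟨[], rfl, 0, h.symm⟩, ⟨[], rfl, 1, h.symm⟩, ⟨[], rfl, 2, h.symm⟩]
    · rintro ⟨w, hw, j, rfl⟩
      rw [List.length_eq_zero_iff] at hw
      subst hw
      fin_cases j <;> simp [V, ctrW]
  | succ m ih =>
    constructor
    · intro hx
      simp only [V, Finset.mem_union, Finset.mem_image] at hx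
      rcases hx with (⟨y, hy, rfl⟩ | ⟨y, hy, rfl⟩) | ⟨y, hy, rfl⟩ <;>
        obtain ⟨w, hw, j, rfl⟩ := ih.1 hy
      exacts [⟨0 :: w, by simp [hw], j, rfl⟩, ⟨1 :: w, by simp [hw], j, rfl⟩,
        ⟨2 :: w, by simp [hw], j, rfl⟩]
    · rintro ⟨w, hw, j, rfl⟩
      match w, hw with
      | i :: t, hw =>
        have ht : ctrW t (sierA j) ∈ V m := ih.2 ⟨t, by simpa using hw, j, rfl⟩
        simp only [V, Finset.mem_union, Finset.mem_image, ctrW_cons]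
        fin_cases i
        · exact Or.inl (Or.inl ⟨_, ht, rfl⟩)
        · exact Or.inl (Or.inr ⟨_, ht, rfl⟩)
        · exact Or.inr ⟨_, ht, rfl⟩

lemma mem_Ed {m : ℕ} {p : Pt × Pt} :
    p ∈ Ed m ↔ ∃ w : List (Fin 3), w.length = m ∧ ∃ i j, i ≠ j ∧
      p = (ctrW w (sierA i), ctrW w (sierA j)) := by
  induction m generalizing p with
  | zero =>
    simp only [Ed, Finset.mem_filter, Finset.mem_product]
    constructor
    · rintro ⟨⟨h1, h2⟩, hne⟩
      simp [V] at h1 h2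
      obtain ⟨i, hi⟩ : ∃ i, sierA i = p.1 := by
        rcases h1 with h|h|h; exacts [⟨0, h.symm⟩, ⟨1, h.symm⟩, ⟨2, h.symm⟩]
      obtain ⟨j, hj⟩ : ∃ j, sierA j = p.2 := by
        rcases h2 with h|h|h; exacts [⟨0, h.symm⟩, ⟨1, h.symm⟩, ⟨2, h.symm⟩]
      refine ⟨[], rfl, i, j, ?_, ?_⟩
      · rintro rfl; rw [← hi, ← hj] at hne; exact hne rfl
      · simp only [ctrW_nil]; exact Prod.ext hi.symm hj.symm
    · rintro ⟨w, hw, i, j, hij, rfl⟩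
      rw [List.length_eq_zero_iff] at hw; subst hw
      refine ⟨⟨?_, ?_⟩, ?_⟩
      · fin_cases i <;> simp [V, ctrW]
      · fin_cases j <;> simp [V, ctrW]
      · simpa [ctrW] using sierA_ne hij
  | succ m ih =>
    simp only [Ed, Finset.mem_biUnion, Finset.mem_univ, true_and, Finset.mem_image]
    constructor
    · rintro ⟨c, q, hq, rfl⟩
      obtain ⟨w, hw, i, j, hij, rfl⟩ := ih.1 hq
      exact ⟨c :: w, by simp [hw], i, j, hij, rfl⟩
    · rintro ⟨w, hw, i, j, hij, rfl⟩
      match w, hw with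
      | c :: t, hw =>
        exact ⟨c, (ctrW t (sierA i), ctrW t (sierA j)),
          ih.2 ⟨t, by simpa using hw, i, j, hij, rfl⟩, rfl⟩

lemma ctr_eq_corner {c i : Fin 3} {q : Pt} (hq : inT q) (h : ctr c q = sierA i) :
    c = i ∧ q = sierA i := by
  have h3 := hs3
  obtain ⟨h0, h1, h2⟩ := hq
  have e1 := congrArg Prod.fst h
  have e2 := congrArg Prod.snd h
  simp only [ctr] at e1 e2
  fin_cases c <;> fin_cases i <;> simp [sierA, Prod.ext_iff] at e1 e2 ⊢ <;>
    first
    | (constructor <;> nlinarith)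
    | nlinarith

lemma corner_pullback {s : List (Fin 3)} {p : Pt} {i : Fin 3} (hp : inT p)
    (h : ctrW s p = sierA i) : p = sierA i := by
  induction s with
  | nil => exact h
  | cons c t ih =>
    have := ctr_eq_corner (inT_ctrW t hp) h
    exact ih this.2

lemma mid_comm (j k : Fin 3) : ctr j (sierA k) = ctr k (sierA j) := by
  simp [ctr, Prod.ext_iff]; constructor <;> ring

lemma mid_ne_corner {j k i : Fin 3} (hjk : j ≠ k) : ctr j (sierA k) ≠ sierA i := by
  intro h
  obtain ⟨rfl, h2⟩ := ctr_eq_corner (inT_sierA k) h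
  exact sierA_ne (Ne.symm hjk) h2

lemma cancel3 {a b : ℝ} (h : Real.sqrt 3 * a = Real.sqrt 3 * b) : a = b :=
  mul_left_cancel₀ (ne_of_gt hs3) h

lemma sep01 {p q : Pt} (hp : inT p) (hq : inT q) (h : ctr 0 p = ctr 1 q) :
    p = sierA 1 ∧ q = sierA 0 := by
  have h3 := hs3
  obtain ⟨p0, p1, p2⟩ := hp
  obtain ⟨q0, q1, q2⟩ := hq
  have e1 := congrArg Prod.fst h
  have e2 := congrArg Prod.snd h
  simp only [ctr, sierA] at e1 e2
  have e1' : p.1 = q.1 + 1/2 := by linarith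
  have e2' : p.2 = q.2 + Real.sqrt 3 / 2 := by linarith
  have hq1 : Real.sqrt 3 * q.1 ≥ q.2 := by linarith
  have hx : Real.sqrt 3 * p.1 = Real.sqrt 3 * (1/2) := by nlinarith
  have hp1 : p.1 = 1/2 := cancel3 hx
  have hp2 : p.2 = Real.sqrt 3 / 2 := by nlinarith
  constructor
  · exact Prod.ext (by simp [sierA]; linarith) (by simp [sierA]; linarith)
  · exact Prod.ext (by simp [sierA]; linarith) (by simp [sierA]; linarith)

lemma sep02 {p q : Pt} (hp : inT p) (hq : inT q) (h : ctr 0 p = ctr 2 q) :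
    p = sierA 2 ∧ q = sierA 0 := by
  have h3 := hs3
  obtain ⟨p0, p1, p2⟩ := hp
  obtain ⟨q0, q1, q2⟩ := hq
  have e1 := congrArg Prod.fst h
  have e2 := congrArg Prod.snd h
  simp only [ctr, sierA] at e1 e2
  have e1' : p.1 = q.1 + 1 := by linarith
  have e2' : p.2 = q.2 := by linarith
  have hp2 : p.2 = 0 := by nlinarith
  have hx : Real.sqrt 3 * p.1 = Real.sqrt 3 * 1 := by nlinarith
  have hp1 : p.1 = 1 := cancel3 hx
  constructor
  · exact Prod.ext (by simp [sierA]; linarith) (by simp [sierA]; linarith)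
  · exact Prod.ext (by simp [sierA]; linarith) (by simp [sierA]; linarith)

lemma sep12 {p q : Pt} (hp : inT p) (hq : inT q) (h : ctr 1 p = ctr 2 q) :
    p = sierA 2 ∧ q = sierA 1 := by
  have h3 := hs3
  obtain ⟨p0, p1, p2⟩ := hp
  obtain ⟨q0, q1, q2⟩ := hq
  have e1 := congrArg Prod.fst h
  have e2 := congrArg Prod.snd h
  simp only [ctr, sierA] at e1 e2
  have e1' : p.1 + 1/2 = q.1 + 1 := by linarith
  have e2' : p.2 + Real.sqrt 3 / 2 = q.2 := by linarith
  have hq2 : Real.sqrt 3 * q.1 ≥ q.2 := by linarith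
  have hx : Real.sqrt 3 * p.1 = Real.sqrt 3 * 1 := by nlinarith
  have hp1 : p.1 = 1 := cancel3 hx
  have hp2 : p.2 = 0 := by nlinarith
  constructor
  · exact Prod.ext (by simp [sierA]; linarith) (by simp [sierA]; linarith)
  · exact Prod.ext (by simp [sierA]; linarith) (by simp [sierA]; linarith)

lemma sep2 {i j : Fin 3} {p q : Pt} (hij : i ≠ j) (hp : inT p) (hq : inT q)
    (h : ctr i p = ctr j q) : p = sierA j ∧ q = sierA i := by
  fin_cases i <;> fin_cases j <;> first
  | exact absurd rfl hij
  | exact sep01 hp hq h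
  | exact sep02 hp hq h
  | exact sep12 hp hq h
  | exact (sep01 hq hp h.symm).symm
  | exact (sep02 hq hp h.symm).symm
  | exact (sep12 hq hp h.symm).symm


lemma mid_eq_mid {j k j' k' : Fin 3} (hjk : j ≠ k) (hjk' : j' ≠ k')
    (h : ctr j (sierA k) = ctr j' (sierA k')) :
    (j = j' ∧ k = k') ∨ (j = k' ∧ k = j') := by
  have h3 := hs3
  have e1 := congrArg Prod.fst h
  have e2 := congrArg Prod.snd h
  clear h
  fin_cases j <;> fin_cases k <;> fin_cases j' <;> fin_cases k' <;>
    simp only [ctr, sierA] at e1 e2 <;>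
    first
    | (exfalso; exact hjk rfl)
    | (exfalso; exact hjk' rfl)
    | decide
    | (exfalso; norm_num at e1)

lemma newRep : ∀ (u u' : List (Fin 3)), u.length = u'.length →
    ∀ {j k j' k' : Fin 3}, j ≠ k → j' ≠ k' →
    ctrW u (ctr j (sierA k)) = ctrW u' (ctr j' (sierA k')) →
    u = u' ∧ ((j = j' ∧ k = k') ∨ (j = k' ∧ k = j'))
  | [], [], _, j, k, j', k', hjk, hjk', h => ⟨rfl, mid_eq_mid hjk hjk' h⟩
  | c :: t, c' :: t', hl, j, k, j', k', hjk, hjk', h => by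
    by_cases hcc : c = c'
    · subst hcc
      have h' := ctr_inj (p := ctrW t (ctr j (sierA k))) (q := ctrW t' (ctr j' (sierA k'))) h
      obtain ⟨h1, h2⟩ := newRep t t' (by simpa using hl) hjk hjk' h'
      exact ⟨by rw [h1], h2⟩
    · exfalso
      have hp : inT (ctrW t (ctr j (sierA k))) := inT_ctrW _ (inT_ctr _ (inT_sierA k))
      have hq : inT (ctrW t' (ctr j' (sierA k'))) := inT_ctrW _ (inT_ctr _ (inT_sierA k'))
      have := (sep2 hcc hp hq h).1
      have := corner_pullback (inT_ctr _ (inT_sierA k)) this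
      exact mid_ne_corner hjk this

lemma newPt : ∀ (u u' : List (Fin 3)), u.length = u'.length →
    ∀ {j k i : Fin 3}, j ≠ k →
    ctrW u (ctr j (sierA k)) = ctrW u' (sierA i) → False
  | [], [], _, j, k, i, hjk, h => mid_ne_corner hjk h
  | c :: t, c' :: t', hl, j, k, i, hjk, h => by
    by_cases hcc : c = c'
    · subst hcc
      exact newPt t t' (by simpa using hl) hjk (ctr_inj h)
    · have hp : inT (ctrW t (ctr j (sierA k))) := inT_ctrW _ (inT_ctr _ (inT_sierA k))
      have hq : inT (ctrW t' (sierA i)) := inT_ctrW _ (inT_sierA i)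
      have := (sep2 hcc hp hq h).1
      have := corner_pullback (inT_ctr _ (inT_sierA k)) this
      exact mid_ne_corner hjk this

lemma ctrW_corner_mem {w : List (Fin 3)} {j : Fin 3} : ctrW w (sierA j) ∈ V w.length :=
  mem_V.2 ⟨w, rfl, j, rfl⟩

lemma V_mono {r r' : ℕ} (h : r ≤ r') : (V r : Set Pt) ⊆ (V r' : Set Pt) := by
  induction r' with
  | zero => simp_all
  | succ m ih =>
    rcases Nat.lt_or_ge r (m+1) with hlt | hge
    · intro x hx
      have hx' : x ∈ (V m : Set Pt) := ih (Nat.lt_succ_iff.1 hlt) hx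
      obtain ⟨w, hw, j, rfl⟩ := mem_V.1 hx'
      have : ctrW (w ++ [j]) (sierA j) ∈ V (m+1) := by
        have hl : (w ++ [j]).length = m + 1 := by simp [hw]
        exact hl ▸ ctrW_corner_mem
      simpa [ctrW_append, ctrW, ctr, sierA] using this
    · have : r = m + 1 := le_antisymm h hge
      subst this; exact fun x hx => hx

lemma ctr_self (j : Fin 3) : ctr j (sierA j) = sierA j := by
  fin_cases j <;> simp [ctr, sierA, Prod.ext_iff] <;> norm_num

lemma mid_mem {u : List (Fin 3)} {j k : Fin 3} :
    ctrW u (ctr j (sierA k)) ∈ V (u.length + 1) := by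
  have : ctrW (u ++ [j]) (sierA k) ∈ V (u ++ [j]).length := ctrW_corner_mem
  simpa [ctrW_append, ctrW] using this

lemma mid_not_old {u : List (Fin 3)} {j k : Fin 3} (hjk : j ≠ k) :
    ctrW u (ctr j (sierA k)) ∉ V u.length := by
  intro hx
  obtain ⟨w, hw, i, hi⟩ := mem_V.1 hx
  exact newPt u w (by rw [hw]) hjk hi.symm


def othr (j k : Fin 3) : Fin 3 := -(j + k)

lemma othr_ne_left : ∀ j k : Fin 3, j ≠ k → othr j k ≠ j := by decide
lemma othr_ne_right : ∀ j k : Fin 3, j ≠ k → othr j k ≠ k := by decide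
lemma othr_comm : ∀ j k : Fin 3, othr j k = othr k j := by decide
lemma othr_eq : ∀ j k o : Fin 3, j ≠ k → j ≠ o → k ≠ o → othr j k = o := by decide
lemma third_idx : ∀ j k i₂ : Fin 3, j ≠ k → i₂ ≠ k → i₂ = j ∨ i₂ = othr j k := by decide

lemma filter_Ed {u : List (Fin 3)} {j k : Fin 3} (hjk : j ≠ k) :
    (Ed (u.length + 1)).filter (fun p => p.1 = ctrW u (ctr j (sierA k))) =
    ({(ctrW u (ctr j (sierA k)), ctrW u (sierA j)),
      (ctrW u (ctr j (sierA k)), ctrW u (ctr j (sierA (othr j k)))),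
      (ctrW u (ctr j (sierA k)), ctrW u (sierA k)),
      (ctrW u (ctr j (sierA k)), ctrW u (ctr k (sierA (othr j k))))} : Finset (Pt × Pt)) := by
  ext p
  simp only [Finset.mem_filter, Finset.mem_insert, Finset.mem_singleton]
  constructor
  · rintro ⟨hp, hx⟩
    obtain ⟨w, hw, i, i₂, hii₂, rfl⟩ := mem_Ed.1 hp
    simp only at hx
    rcases List.eq_nil_or_concat w with rfl | ⟨t, l, rfl⟩
    · simp at hw
    · simp only [List.concat_eq_append] at hw hx ⊢
      have hlen : t.length = u.length := by simpa using hw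
      simp only [ctrW_append, ctrW_cons, ctrW_nil] at hx ⊢
      by_cases hli : l = i
      · subst hli
        rw [ctr_self] at hx
        exact absurd hx.symm (fun h => newPt u t hlen.symm hjk h)
      · obtain ⟨rfl, hcase⟩ := newRep t u hlen hli hjk hx
        rcases hcase with ⟨rfl, rfl⟩ | ⟨rfl, rfl⟩
        · rcases third_idx l i i₂ hli (Ne.symm hii₂) with rfl | rfl
          · left; exact Prod.ext hx (by rw [ctr_self])
          · right; left; exact Prod.ext hx rfl
        · rcases third_idx l i i₂ hli (Ne.symm hii₂) with rfl | rfl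
          · right; right; left
            exact Prod.ext (by rw [hx, mid_comm]) (by rw [ctr_self])
          · right; right; right
            exact Prod.ext (by rw [hx, mid_comm]) (by rw [othr_comm])
  · intro hcases
    have hmem : ∀ (c : Fin 3) (i i₂ : Fin 3), i ≠ i₂ →
        ((ctrW u (ctr c (sierA i)), ctrW u (ctr c (sierA i₂))) : Pt × Pt) ∈ Ed (u.length + 1) := by
      intro c i i₂ hne
      refine mem_Ed.2 ⟨u ++ [c], by simp, i, i₂, hne, ?_⟩
      simp only [ctrW_append, ctrW_cons, ctrW_nil]
    have hoj : othr j k ≠ j := othr_ne_left j k hjk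
    have hok : othr j k ≠ k := othr_ne_right j k hjk
    rcases hcases with rfl | rfl | rfl | rfl
    · refine ⟨?_, rfl⟩
      have := hmem j k j (Ne.symm hjk)
      rwa [ctr_self] at this
    · exact ⟨hmem j k (othr j k) (fun h => hok h.symm), rfl⟩
    · refine ⟨?_, rfl⟩
      have := hmem k j k hjk
      rw [ctr_self, ← mid_comm] at this
      exact this
    · refine ⟨?_, rfl⟩
      have := hmem k j (othr j k) (fun h => hoj h.symm)
      rw [← mid_comm] at this
      exact this


lemma neighbors_ne {u : List (Fin 3)} {j k : Fin 3} (hjk : j ≠ k) :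
    ctrW u (sierA j) ≠ ctrW u (ctr j (sierA (othr j k))) ∧
    ctrW u (sierA j) ≠ ctrW u (sierA k) ∧
    ctrW u (sierA j) ≠ ctrW u (ctr k (sierA (othr j k))) ∧
    ctrW u (ctr j (sierA (othr j k))) ≠ ctrW u (sierA k) ∧
    ctrW u (ctr j (sierA (othr j k))) ≠ ctrW u (ctr k (sierA (othr j k))) ∧
    ctrW u (sierA k) ≠ ctrW u (ctr k (sierA (othr j k))) := by
  have hoj : othr j k ≠ j := othr_ne_left j k hjk
  have hok : othr j k ≠ k := othr_ne_right j k hjk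
  refine ⟨?_, ?_, ?_, ?_, ?_, ?_⟩ <;> intro h <;> have h' := ctrW_inj h
  · exact mid_ne_corner (fun hh => hoj hh.symm) h'.symm
  · exact sierA_ne hjk h'
  · exact mid_ne_corner (fun hh => hok hh.symm) h'.symm
  · exact mid_ne_corner (fun hh => hoj hh.symm) h'
  · rcases mid_eq_mid (fun hh => hoj hh.symm) (fun hh => hok hh.symm) h' with ⟨h1, _⟩ | ⟨h1, h2⟩
    · exact hjk h1
    · exact hok h2
  · exact mid_ne_corner (fun hh => hok hh.symm) h'.symm

/-- The harmonic equation at the midpoint opposite `othr j k` in cell `u`. -/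
lemma cell_eq {n : ℕ} {ub : Pt → ℝ}
    (hH : ∀ m : ℕ, n < m → ∀ x ∈ (V m : Set Pt), x ∉ (V (m - 1) : Set Pt) → lap m ub x = 0)
    {u : List (Fin 3)} (hn : n ≤ u.length) {j k : Fin 3} (hjk : j ≠ k) :
    ub (ctrW u (sierA j)) + ub (ctrW u (ctr j (sierA (othr j k)))) +
      ub (ctrW u (sierA k)) + ub (ctrW u (ctr k (sierA (othr j k)))) =
    4 * ub (ctrW u (ctr j (sierA k))) := by
  set x := ctrW u (ctr j (sierA k)) with hxdef
  have hmem : x ∈ (V (u.length + 1) : Set Pt) := Finset.mem_coe.2 mid_mem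
  have hnot : x ∉ (V (u.length + 1 - 1) : Set Pt) := by
    simpa using fun hc => mid_not_old hjk (Finset.mem_coe.1 hc)
  have h0 := hH (u.length + 1) (by omega) x hmem hnot
  rw [lap, filter_Ed hjk] at h0
  have h5 : ((5 : ℝ) ^ (u.length + 1)) ≠ 0 := by positivity
  have hsum := (mul_eq_zero.1 h0).resolve_left h5
  obtain ⟨d1, d2, d3, d4, d5, d6⟩ := neighbors_ne (u := u) hjk
  have e1 : ((x, ctrW u (sierA j)) : Pt × Pt) ∉
      ({(x, ctrW u (ctr j (sierA (othr j k)))), (x, ctrW u (sierA k)),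
        (x, ctrW u (ctr k (sierA (othr j k))))} : Finset (Pt × Pt)) := by
    simp [Prod.ext_iff, d1, d2, d3]
  have e2 : ((x, ctrW u (ctr j (sierA (othr j k)))) : Pt × Pt) ∉
      ({(x, ctrW u (sierA k)), (x, ctrW u (ctr k (sierA (othr j k))))} : Finset (Pt × Pt)) := by
    simp [Prod.ext_iff, d4, d5]
  have e3 : ((x, ctrW u (sierA k)) : Pt × Pt) ∉
      ({(x, ctrW u (ctr k (sierA (othr j k))))} : Finset (Pt × Pt)) := by
    simp [Prod.ext_iff, d6]
  rw [Finset.sum_insert e1, Finset.sum_insert e2, Finset.sum_insert e3,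
    Finset.sum_singleton] at hsum
  simp only at hsum
  linarith

/-- The 1/5–2/5 extension rule. -/
lemma cell_formula {n : ℕ} {ub : Pt → ℝ}
    (hH : ∀ m : ℕ, n < m → ∀ x ∈ (V m : Set Pt), x ∉ (V (m - 1) : Set Pt) → lap m ub x = 0)
    {u : List (Fin 3)} (hn : n ≤ u.length) {j k o : Fin 3}
    (hjk : j ≠ k) (hjo : j ≠ o) (hko : k ≠ o) :
    ub (ctrW u (ctr j (sierA k))) =
      (ub (ctrW u (sierA o)) + 2 * ub (ctrW u (sierA j)) + 2 * ub (ctrW u (sierA k))) / 5 := by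
  have ho1 : othr j k = o := othr_eq j k o hjk hjo hko
  have ho2 : othr j o = k := othr_eq j o k hjo hjk (Ne.symm hko)
  have ho3 : othr k o = j := othr_eq k o j hko (Ne.symm hjk) (Ne.symm hjo)
  have E1 := cell_eq hH hn hjk
  have E2 := cell_eq hH hn hjo
  have E3 := cell_eq hH hn hko
  rw [ho1] at E1
  rw [ho2] at E2
  rw [ho3] at E3
  rw [mid_comm o k] at E2
  rw [mid_comm k j, mid_comm o j] at E3
  linarith


lemma conv_hi {a b c x : ℝ} (h : x = (c + 2*a + 2*b)/5) : x ≤ a ∨ x ≤ b ∨ x ≤ c := by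
  by_contra hc
  push_neg at hc
  obtain ⟨h1, h2, h3⟩ := hc
  linarith

lemma conv_lo {a b c x : ℝ} (h : x = (c + 2*a + 2*b)/5) : a ≤ x ∨ b ≤ x ∨ c ≤ x := by
  by_contra hc
  push_neg at hc
  obtain ⟨h1, h2, h3⟩ := hc
  linarith

lemma bnd {n : ℕ} {ub : Pt → ℝ}
    (hH : ∀ m : ℕ, n < m → ∀ x ∈ (V m : Set Pt), x ∉ (V (m - 1) : Set Pt) → lap m ub x = 0) :
    ∀ (s u : List (Fin 3)), n ≤ u.length → ∀ i : Fin 3,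
      (∃ j, ub (ctrW u (ctrW s (sierA i))) ≤ ub (ctrW u (sierA j))) ∧
      (∃ j, ub (ctrW u (sierA j)) ≤ ub (ctrW u (ctrW s (sierA i))))
  | [], u, hn, i => ⟨⟨i, le_refl _⟩, ⟨i, le_refl _⟩⟩
  | c :: s', u, hn, i => by
    have hz : ctrW u (ctrW (c :: s') (sierA i)) = ctrW (u ++ [c]) (ctrW s' (sierA i)) := by
      rw [ctrW_append]; rfl
    have hn' : n ≤ (u ++ [c]).length := by
      simp only [List.length_append, List.length_cons, List.length_nil]; omega
    obtain ⟨⟨j1, hj1⟩, ⟨j2, hj2⟩⟩ := bnd hH s' (u ++ [c]) hn' i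
    have key : ∀ j₀ : Fin 3,
        (∃ t, ub (ctrW (u ++ [c]) (sierA j₀)) ≤ ub (ctrW u (sierA t))) ∧
        (∃ t, ub (ctrW u (sierA t)) ≤ ub (ctrW (u ++ [c]) (sierA j₀))) := by
      intro j₀
      have hrw : ctrW (u ++ [c]) (sierA j₀) = ctrW u (ctr c (sierA j₀)) := by
        rw [ctrW_append]; rfl
      by_cases hc : c = j₀
      · subst hc
        rw [hrw, ctr_self]
        exact ⟨⟨c, le_refl _⟩, ⟨c, le_refl _⟩⟩
      · have ho1 : c ≠ othr c j₀ := fun h => othr_ne_left c j₀ hc h.symm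
        have ho2 : j₀ ≠ othr c j₀ := fun h => othr_ne_right c j₀ hc h.symm
        have hf := cell_formula hH hn hc ho1 ho2
        rw [hrw]
        constructor
        · rcases conv_hi hf with h | h | h
          exacts [⟨c, h⟩, ⟨j₀, h⟩, ⟨othr c j₀, h⟩]
        · rcases conv_lo hf with h | h | h
          exacts [⟨c, h⟩, ⟨j₀, h⟩, ⟨othr c j₀, h⟩]
    rw [ctrW_cons] at hz ⊢
    constructor
    · obtain ⟨t, ht⟩ := (key j1).1
      exact ⟨t, le_trans (by rw [hz]; exact hj1) ht⟩
    · obtain ⟨t, ht⟩ := (key j2).2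
      exact ⟨t, le_trans ht (by rw [hz]; exact hj2)⟩

lemma eucl_ctr (i : Fin 3) (p q : Pt) : eucl (ctr i p) (ctr i q) = eucl p q / 2 := by
  unfold eucl ctr
  simp only
  have h : ((q.1 + (sierA i).1)/2 - (p.1 + (sierA i).1)/2)^2 +
      ((q.2 + (sierA i).2)/2 - (p.2 + (sierA i).2)/2)^2 =
      ((q.1-p.1)^2 + (q.2-p.2)^2) * (1/4) := by ring
  rw [h, Real.sqrt_mul (by positivity), show (1/4:ℝ) = (1/2)^2 by norm_num,
    Real.sqrt_sq (by norm_num)]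
  ring

lemma eucl_ctrW (w : List (Fin 3)) (p q : Pt) :
    eucl (ctrW w p) (ctrW w q) = eucl p q / 2 ^ w.length := by
  induction w with
  | nil => simp
  | cons c t ih =>
    rw [ctrW_cons, ctrW_cons, eucl_ctr, ih]
    rw [List.length_cons, pow_succ]
    ring

lemma diamT {p q : Pt} (hp : inT p) (hq : inT q) : eucl p q ≤ 1 := by
  have h3 := hs3
  have h3sq := hs3sq
  obtain ⟨p0, p1, p2⟩ := hp
  obtain ⟨q0, q1, q2⟩ := hq
  rw [eucl]
  rw [show (1:ℝ) = Real.sqrt 1 by simp]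
  apply Real.sqrt_le_sqrt
  set s := Real.sqrt 3 with hs
  set a : ℝ := 2 * (q.2 - p.2) with hadef
  set b : ℝ := s * q.1 - q.2 - (s * p.1 - p.2) with hbdef
  have hq2 : 2 * q.2 ≤ s := by linarith
  have hp2' : 2 * p.2 ≤ s := by linarith
  have ha1 : a ≤ s := by linarith
  have ha2 : -s ≤ a := by linarith
  have hb1 : b ≤ s := by linarith
  have hb2 : -s ≤ b := by linarith
  have hab1 : a + b ≤ s := by linarith
  have hab2 : -s ≤ a + b := by linarith
  have hA : a^2 ≤ 3 := by nlinarith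
  have hB : b^2 ≤ 3 := by nlinarith
  have hAB : (a+b)^2 ≤ 3 := by nlinarith
  have key : a^2 + a*b + b^2 ≤ 3 := by
    rcases le_or_gt 0 (a*b) with hab | hab
    · nlinarith
    · nlinarith [mul_nonneg (by linarith : (0:ℝ) ≤ 3 - a^2) (by linarith : (0:ℝ) ≤ 3 - b^2)]
  have h1 : s * (q.1 - p.1) = b + a/2 := by rw [hbdef, hadef]; ring
  have h2 : 3 * (q.1 - p.1)^2 = (b + a/2)^2 := by
    rw [← h1]
    have : (s * (q.1 - p.1))^2 = s * s * (q.1 - p.1)^2 := by ring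
    rw [this, h3sq]
  have h4 : 3 * (q.2 - p.2)^2 = 3 * (a/2)^2 := by rw [hadef]; ring
  nlinarith [h2, h4, key]

lemma mem_Vstar_of_V {m : ℕ} {x : Pt} (h : x ∈ V m) : x ∈ Vstar :=
  Set.mem_iUnion.2 ⟨m, Finset.mem_coe.2 h⟩

lemma eucl_self (x : Pt) : eucl x x = 0 := by simp [eucl]

theorem main (n : ℕ) (u ub : Pt → ℝ)
    (hA : ∀ x ∈ (V n : Set Pt), ub x = u x)
    (hH : ∀ m : ℕ, n < m → ∀ x ∈ (V m : Set Pt), x ∉ (V (m - 1) : Set Pt) → lap m ub x = 0)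
    (M : ℝ)
    (hM : ∀ x ∈ Vstar, ∀ y ∈ Vstar, eucl x y ≤ 1 / 2 ^ n → |u x - u y| ≤ M) :
    ∀ x ∈ Vstar, |u x - ub x| ≤ 2 * M := by
  intro x hx
  have hM0 : 0 ≤ M := by
    have h := hM x hx x hx (by rw [eucl_self]; positivity)
    simpa using h
  obtain ⟨m, hm⟩ : ∃ m, x ∈ (V m : Set Pt) := Set.mem_iUnion.1 hx
  rcases le_or_gt m n with hmn | hnm
  · have hxn : x ∈ (V n : Set Pt) := V_mono hmn hm
    rw [hA x hxn]
    simpa using by linarith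
  · obtain ⟨w, hw, i, rfl⟩ := mem_V.1 (Finset.mem_coe.1 hm)
    set w1 := w.take n with hw1def
    set w2 := w.drop n with hw2def
    have hsplit : w = w1 ++ w2 := (List.take_append_drop n w).symm
    have hl1 : w1.length = n := by
      rw [hw1def, List.length_take, hw]; omega
    have hxeq : ctrW w (sierA i) = ctrW w1 (ctrW w2 (sierA i)) := by
      conv_lhs => rw [hsplit]
      rw [ctrW_append]
    obtain ⟨⟨j1, hj1⟩, ⟨j2, hj2⟩⟩ := bnd hH w2 w1 (le_of_eq hl1.symm) i
    have hcorner : ∀ j : Fin 3, ctrW w1 (sierA j) ∈ (V n : Set Pt) := by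
      intro j
      have := ctrW_corner_mem (w := w1) (j := j)
      rw [hl1] at this
      exact Finset.mem_coe.2 this
    have hcornerstar : ∀ j : Fin 3, ctrW w1 (sierA j) ∈ Vstar := by
      intro j
      exact Set.mem_iUnion.2 ⟨n, hcorner j⟩
    have hdist : ∀ j : Fin 3, eucl (ctrW w (sierA i)) (ctrW w1 (sierA j)) ≤ 1 / 2 ^ n := by
      intro j
      rw [hxeq, eucl_ctrW, hl1]
      gcongr
      exact diamT (inT_ctrW _ (inT_sierA i)) (inT_sierA j)
    have hb1 := hM _ hx _ (hcornerstar j1) (hdist j1)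
    have hb2 := hM _ hx _ (hcornerstar j2) (hdist j2)
    rw [abs_le] at hb1 hb2
    have hub1 : ub (ctrW w (sierA i)) ≤ u (ctrW w1 (sierA j1)) := by
      rw [← hA _ (hcorner j1)]
      rw [hxeq]
      exact hj1
    have hub2 : u (ctrW w1 (sierA j2)) ≤ ub (ctrW w (sierA i)) := by
      rw [← hA _ (hcorner j2)]
      rw [hxeq]
      exact hj2
    rw [abs_le]
    constructor
    · linarith [hb1.1]
    · linarith [hb2.2]

/-- `sup_{x∈V*} |u x − ū_n x| ≤ 2 sup{|u x − u y| : x,y ∈ V*, |x−y| ≤ 2^{−n}}`,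
expressed via upper bounds `M` of the right-hand modulus of continuity. -/
theorem harmonic_extension_uniform_approx (n : ℕ) (u ub : Pt → ℝ)
    (hub : IsHarmonicExtension n u ub) (M : ℝ)
    (hM : ∀ x ∈ Vstar, ∀ y ∈ Vstar, eucl x y ≤ 1 / 2 ^ n → |u x - u y| ≤ M) :
    ∀ x ∈ Vstar, |u x - ub x| ≤ 2 * M := by
  obtain ⟨hA, hH⟩ := hub
  exact main n u ub hA hH M hM

end
end
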